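/- A pair (X,Y) of interpretations with X ⊆ Y is a ⟨U,B⟩-model of a program P (where the head alphabet is the full universe U) iff Y ⊨ P, X ⊨ P^Y, and for all X' with X ⊊ X' ⊊ Y and X'∩B = X∩B, X' ⊭ P^Y. -/
import Mathlib


structure Rule (α : Type*) where
  head : Finset α
  pbody : Finset α
  nbody : Finset α
deriving DecidableEq

abbrev Program (α : Type*) := Finset (Rule α)

variable {α : Type*} [DecidableEq α]

/-- An interpretation `Y` satisfies a rule. -/
def satRule (Y : Finset α) (r : Rule α) : Prop :=
  r.pbody ⊆ Y → r.nbody ∩ Y = ∅ → (r.head ∩ Y).Nonempty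

/-- `Y` is a model of the program `P`. -/
def satProg (Y : Finset α) (P : Program α) : Prop := ∀ r ∈ P, satRule Y r

/-- The Gelfond–Lifschitz reduct `P^Y`. -/
def reduct (P : Program α) (Y : Finset α) : Program α :=
  (P.filter (fun r => r.nbody ∩ Y = ∅)).image (fun r => ⟨r.head, r.pbody, ∅⟩)

/-- `Y` is an answer set of `P`: a minimal model of `P^Y`. -/
def isAS (P : Program α) (Y : Finset α) : Prop :=
  satProg Y (reduct P Y) ∧ ∀ Z, Z ⊂ Y → ¬ satProg Z (reduct P Y)

def heads (P : Program α) : Finset α := P.biUnion Rule.head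
def bodies (P : Program α) : Finset α := P.biUnion (fun r => r.pbody ∪ r.nbody)

/-- A positive program: no default negation. -/
def Positive (P : Program α) : Prop := ∀ r ∈ P, r.nbody = ∅

/-- A unary program: only facts `a ←` and rules `a ← b`. -/
def Unary (P : Program α) : Prop :=
  ∀ r ∈ P, r.nbody = ∅ ∧ r.head.card = 1 ∧ r.pbody.card ≤ 1

/-- Membership in the class `C_⟨H,B⟩`. -/
def inClass (H B : Finset α) (P : Program α) : Prop := heads P ⊆ H ∧ bodies P ⊆ B

/-- `V ⪯_H^B Z`. -/
def preceq (H B V Z : Finset α) : Prop := V ∩ H ⊆ Z ∩ H ∧ Z ∩ B ⊆ V ∩ B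

/-- `V ≺_H^B Z`. -/
def prec (H B V Z : Finset α) : Prop := preceq H B V Z ∧ V ∩ (H ∪ B) ≠ Z ∩ (H ∪ B)

/-- `Y` is an `H`-total model of `P`. -/
def Htotal (H : Finset α) (P : Program α) (Y : Finset α) : Prop :=
  satProg Y P ∧ ∀ Z, Z ⊂ Y → satProg Z (reduct P Y) → Z ∩ H ⊂ Y ∩ H

/-- The containment `P ⊆_⟨H,B⟩ Q`. -/
def containsHB (H B : Finset α) (P Q : Program α) : Prop :=
  ∀ R : Program α, inClass H B R → ∀ Y, isAS (P ∪ R) Y → isAS (Q ∪ R) Y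

/-- The equivalence `P ≡_⟨H,B⟩ Q`. -/
def equivHB (H B : Finset α) (P Q : Program α) : Prop :=
  ∀ R : Program α, inClass H B R → ∀ Y, isAS (P ∪ R) Y ↔ isAS (Q ∪ R) Y

/-- A witness against `P ⊆_⟨H,B⟩ Q`. -/
def Witness (H B : Finset α) (P Q : Program α) (X Y : Finset α) : Prop :=
  X ⊆ Y ∧ Htotal H P Y ∧
    (satProg Y Q → X ⊂ Y ∧ satProg X (reduct Q Y) ∧
      ∀ X', preceq H B X X' → X' ⊂ Y → ¬ satProg X' (reduct P Y))

/-- `(X,Y)` is `⪯_H^B`-maximal for `P`. -/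
def maximalHB (H B : Finset α) (P : Program α) (X Y : Finset α) : Prop :=
  satProg X (reduct P Y) ∧ ∀ X', prec H B X X' → X' ⊂ Y → ¬ satProg X' (reduct P Y)

/-- `(X,Y)` is an `⟨H,B⟩`-model of `P`. -/
def HBmodel (H B : Finset α) (P : Program α) (X Y : Finset α) : Prop :=
  X ⊆ Y ∧ Htotal H P Y ∧
    (X ⊂ Y → ∃ X', X' ⊂ Y ∧ X' ∩ (H ∪ B) = X ∧ maximalHB H B P X' Y)

theorem body_relativized_models [Fintype α] (P : Program α) (B X Y : Finset α)
    (hXY : X ⊆ Y) :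
    HBmodel (Finset.univ : Finset α) B P X Y ↔
      satProg Y P ∧ satProg X (reduct P Y) ∧
        ∀ X', X ⊂ X' → X' ⊂ Y → X' ∩ B = X ∩ B → ¬ satProg X' (reduct P Y) := by
  have hu : (Finset.univ : Finset α) ∪ B = Finset.univ := Finset.union_eq_left.2 (Finset.subset_univ B)
  have hred : satProg Y P → satProg Y (reduct P Y) := by
    intro hY r hr
    simp only [reduct, Finset.mem_image, Finset.mem_filter] at hr
    obtain ⟨r', ⟨hr'P, hr'n⟩, rfl⟩ := hr
    intro hp _
    exact hY r' hr'P hp hr'n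
  constructor
  · rintro ⟨_, ⟨hY, _⟩, hex⟩
    rcases eq_or_ne X Y with rfl | hne
    · refine ⟨hY, hred hY, ?_⟩
      intro X' h1 h2 _
      exact absurd (h1.trans h2) (lt_irrefl X)
    · obtain ⟨X', hX'Y, hXeq, hmax⟩ := hex (lt_of_le_of_ne hXY hne)
      rw [hu, Finset.inter_univ] at hXeq
      subst hXeq
      refine ⟨hY, hmax.1, ?_⟩
      intro X'' h1 h2 h3
      refine hmax.2 X'' ⟨⟨?_, ?_⟩, ?_⟩ h2
      · simpa using h1.subset
      · simp [h3]
      · simp only [hu, Finset.inter_univ]; exact h1.ne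
  · rintro ⟨hY, hX, hmin⟩
    refine ⟨hXY, ⟨hY, fun Z hZ _ => by simpa using hZ⟩, ?_⟩
    intro hXY'
    refine ⟨X, hXY', by rw [hu, Finset.inter_univ], hX, ?_⟩
    rintro X' ⟨⟨h1, h2⟩, h3⟩ h4
    simp only [Finset.inter_univ] at h1
    rw [hu, Finset.inter_univ, Finset.inter_univ] at h3
    have hss : X ⊂ X' := lt_of_le_of_ne h1 h3
    exact hmin X' hss h4 (le_antisymm h2 (Finset.inter_subset_inter_right h1))
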